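/- For all s, t ≥ 1 there exists an integer c_L(s,t) such that every t-coloring of Q_n with n ≥ c_L(s,t) contains a copy of Q_s (i.e. an s-dimensional subcube) such that the restriction of the coloring to this subcube is layered (constant on each layer of the subcube). -/

import Mathlib

open Finset

section RamseyAux

variable {t : ℕ}

/-- `χ` is constant on `r`-element subsets of `T`. -/
def HomOn {α : Type} (χ : Finset α → Fin t) (r : ℕ) (T : Finset α) : Prop :=
  ∀ A B : Finset α, A ⊆ T → B ⊆ T → A.card = r → B.card = r → χ A = χ B

theorem homOn_mono {α : Type} {χ : Finset α → Fin t} {r : ℕ} {T T' : Finset α}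
    (h : T ⊆ T') (hH : HomOn χ r T') : HomOn χ r T :=
  fun A B hA hB hAc hBc => hH A B (hA.trans h) (hB.trans h) hAc hBc

/-- Finite hypergraph Ramsey theorem. -/
theorem ramseyAux (ht : 1 ≤ t) : ∀ r : ℕ, ∃ Mf : ℕ → ℕ,
    ∀ (N : ℕ) (α : Type) [LinearOrder α] (S : Finset α) (χ : Finset α → Fin t),
      Mf N ≤ S.card → ∃ T, T ⊆ S ∧ N ≤ T.card ∧ HomOn χ r T := by
  intro r
  induction r with
  | zero =>
    refine ⟨id, fun N α _ S χ h => ⟨S, Subset.rfl, h, ?_⟩⟩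
    intro A B _ _ hA hB
    rw [card_eq_zero] at hA hB; rw [hA, hB]
  | succ r ih =>
    obtain ⟨Mf, hMf⟩ := ih
    have inner : ∀ m : ℕ, ∃ K : ℕ,
        ∀ (α : Type) [LinearOrder α] (S : Finset α) (χ : Finset α → Fin t),
          K ≤ S.card → ∃ B, B ⊆ S ∧ m ≤ B.card ∧
            ∀ a ∈ B, ∀ A A' : Finset α, A ⊆ B.filter (a < ·) → A' ⊆ B.filter (a < ·) →
              A.card = r → A'.card = r → χ (insert a A) = χ (insert a A') := by
      intro m
      induction m with
      | zero => exact ⟨0, fun α _ S χ _ => ⟨∅, empty_subset _, le_refl _, by simp⟩⟩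
      | succ m ihm =>
        obtain ⟨K, hK⟩ := ihm
        refine ⟨Mf K + 1, ?_⟩
        intro α _ S χ hS
        have hSne : S.Nonempty := card_pos.mp (by omega)
        set a := S.min' hSne with ha
        have haS : a ∈ S := S.min'_mem hSne
        have hcard : Mf K ≤ (S.erase a).card := by
          rw [card_erase_of_mem haS]; omega
        obtain ⟨T, hTS, hTc, hHom⟩ := hMf K α (S.erase a) (fun A => χ (insert a A)) hcard
        obtain ⟨B', hB'T, hB'c, hPre⟩ := hK α T χ hTc
        have haB' : a ∉ B' := fun h => (mem_erase.mp (hTS (hB'T h))).1 rfl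
        have hB'S : ∀ x ∈ B', x ∈ S := fun x hx => erase_subset _ _ (hTS (hB'T hx))
        refine ⟨insert a B', ?_, ?_, ?_⟩
        · intro x hx
          rcases mem_insert.mp hx with h | h
          · exact h ▸ haS
          · exact hB'S x h
        · rw [card_insert_of_notMem haB']; omega
        · intro b hb A A' hA hA' hAc hA'c
          have hsub : ∀ x ∈ (insert a B').filter (b < ·), (x ∈ B' ∧ b < x) ∨ (x = a ∧ b < a) := by
            intro x hx
            rw [mem_filter, mem_insert] at hx
            rcases hx.1 with h | h
            · exact Or.inr ⟨h, h ▸ hx.2⟩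
            · exact Or.inl ⟨h, hx.2⟩
          rcases mem_insert.mp hb with hba | hbB'
          · subst hba
            have hAT : A ⊆ T := by
              intro x hx
              rcases hsub x (hA hx) with h | ⟨h, hlt⟩
              · exact hB'T h.1
              · exact absurd (h ▸ hlt) (lt_irrefl _)
            have hA'T : A' ⊆ T := by
              intro x hx
              rcases hsub x (hA' hx) with h | ⟨h, hlt⟩
              · exact hB'T h.1
              · exact absurd (h ▸ hlt) (lt_irrefl _)
            exact hHom A A' hAT hA'T hAc hA'c
          · have hab : ¬ b < a := not_lt.mpr (S.min'_le b (hB'S b hbB'))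
            have hAB : A ⊆ B'.filter (b < ·) := by
              intro x hx
              rcases hsub x (hA hx) with h | ⟨_, hlt⟩
              · exact mem_filter.mpr ⟨h.1, h.2⟩
              · exact absurd hlt hab
            have hA'B : A' ⊆ B'.filter (b < ·) := by
              intro x hx
              rcases hsub x (hA' hx) with h | ⟨_, hlt⟩
              · exact mem_filter.mpr ⟨h.1, h.2⟩
              · exact absurd hlt hab
            exact hPre b hbB' A A' hAB hA'B hAc hA'c
    choose Kf hKf using inner
    refine ⟨fun N => Kf (t * N + r), ?_⟩
    intro N α _ S χ hS
    classical
    obtain ⟨B, hBS, hBc, hPre⟩ := hKf (t * N + r) α S χ hS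
    set pick : α → Finset α := fun a =>
      if h : r ≤ (B.filter (a < ·)).card then (exists_subset_card_eq h).choose else ∅ with hpickdef
    have hpick : ∀ a, r ≤ (B.filter (a < ·)).card →
        pick a ⊆ B.filter (a < ·) ∧ (pick a).card = r := by
      intro a h
      simp only [hpickdef, dif_pos h]
      exact ⟨(exists_subset_card_eq h).choose_spec.1, (exists_subset_card_eq h).choose_spec.2⟩
    set C : Finset α := B.filter (fun a => r ≤ (B.filter (a < ·)).card) with hCdef
    have hCcard : t * N ≤ C.card := by
      have hsplit := card_filter_add_card_filter_not
        (s := B) (p := fun a => r ≤ (B.filter (a < ·)).card)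
      have hDle : (B.filter (fun a => ¬ r ≤ (B.filter (a < ·)).card)).card ≤ r := by
        have hinj : Set.InjOn (fun a => (B.filter (a < ·)).card)
            ↑(B.filter (fun a => ¬ r ≤ (B.filter (a < ·)).card)) := by
          intro x hx y hy hxy
          simp only [coe_filter, Set.mem_setOf_eq] at hx hy
          by_contra hne
          rcases lt_trichotomy x y with hlt | heq | hlt
          · have hss : B.filter (y < ·) ⊂ B.filter (x < ·) := by
              refine Finset.ssubset_iff_of_subset ?_ |>.mpr ⟨y, ?_, ?_⟩
              · exact fun z hz => mem_filter.mpr ⟨(mem_filter.mp hz).1,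
                  hlt.trans (mem_filter.mp hz).2⟩
              · exact mem_filter.mpr ⟨hy.1, hlt⟩
              · simp
            exact absurd hxy (card_lt_card hss).ne'
          · exact hne heq
          · have hss : B.filter (x < ·) ⊂ B.filter (y < ·) := by
              refine Finset.ssubset_iff_of_subset ?_ |>.mpr ⟨x, ?_, ?_⟩
              · exact fun z hz => mem_filter.mpr ⟨(mem_filter.mp hz).1,
                  hlt.trans (mem_filter.mp hz).2⟩
              · exact mem_filter.mpr ⟨hx.1, hlt⟩
              · simp
            exact absurd hxy (card_lt_card hss).ne
        have hmaps : ∀ a ∈ B.filter (fun a => ¬ r ≤ (B.filter (a < ·)).card),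
            (B.filter (a < ·)).card ∈ Finset.range r := by
          intro a ha
          exact mem_range.mpr (not_le.mp (mem_filter.mp ha).2)
        calc (B.filter (fun a => ¬ r ≤ (B.filter (a < ·)).card)).card
            ≤ (Finset.range r).card := card_le_card_of_injOn _ hmaps hinj
          _ = r := card_range r
      rw [hCdef]
      omega
    have hnet : Nonempty (Fin t) := ⟨⟨0, ht⟩⟩
    obtain ⟨i, _, hDc⟩ := exists_le_card_fiber_of_mul_le_card_of_maps_to
      (s := C) (t := (univ : Finset (Fin t))) (f := fun a => χ (insert a (pick a)))
      (fun a _ => mem_univ _) univ_nonempty (by simpa using hCcard)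
    set D : Finset α := C.filter (fun a => χ (insert a (pick a)) = i) with hDdef
    have hDC : D ⊆ C := filter_subset _ _
    have hCB : C ⊆ B := filter_subset _ _
    have hkey : ∀ A : Finset α, A ⊆ D → A.card = r + 1 → χ A = i := by
      intro A hAD hAc
      have hAne : A.Nonempty := card_pos.mp (by omega)
      set a := A.min' hAne with hadef
      have haA : a ∈ A := A.min'_mem hAne
      have haD : a ∈ D := hAD haA
      have haC : a ∈ C := hDC haD
      have haB : a ∈ B := hCB haC
      have hr : r ≤ (B.filter (a < ·)).card := (mem_filter.mp haC).2
      obtain ⟨hps, hpc⟩ := hpick a hr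
      have hA'c : (A.erase a).card = r := by rw [card_erase_of_mem haA, hAc]; rfl
      have hA'f : A.erase a ⊆ B.filter (a < ·) := by
        intro x hx
        obtain ⟨hxa, hxA⟩ := mem_erase.mp hx
        exact mem_filter.mpr ⟨hCB (hDC (hAD hxA)),
          lt_of_le_of_ne (A.min'_le x hxA) (Ne.symm hxa)⟩
      have h1 : χ A = χ (insert a (A.erase a)) := by rw [insert_erase haA]
      have h2 : χ (insert a (A.erase a)) = χ (insert a (pick a)) :=
        hPre a haB (A.erase a) (pick a) hA'f hps hA'c hpc
      have h3 : χ (insert a (pick a)) = i := (mem_filter.mp haD).2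
      rw [h1, h2, h3]
    refine ⟨D, fun x hx => hBS (hCB (hDC hx)), hDc, ?_⟩
    intro A A' hA hA' hAc hA'c
    rw [hkey A hA hAc, hkey A' hA' hA'c]

/-- Iterate Ramsey over all uniformities up to `k`. -/
theorem levelsAux (ht : 1 ≤ t) : ∀ k : ℕ, ∃ Mf : ℕ → ℕ,
    ∀ (N : ℕ) (α : Type) [LinearOrder α] (S : Finset α) (χ : Finset α → Fin t),
      Mf N ≤ S.card → ∃ T, T ⊆ S ∧ N ≤ T.card ∧ ∀ j ≤ k, HomOn χ j T := by
  intro k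
  induction k with
  | zero =>
    refine ⟨id, fun N α _ S χ h => ⟨S, Subset.rfl, h, ?_⟩⟩
    intro j hj A B _ _ hA hB
    interval_cases j
    rw [card_eq_zero] at hA hB; rw [hA, hB]
  | succ k ihk =>
    obtain ⟨Mf, hMf⟩ := ihk
    obtain ⟨Mg, hMg⟩ := ramseyAux ht (k + 1)
    refine ⟨fun N => Mg (Mf N), ?_⟩
    intro N α _ S χ hS
    obtain ⟨T1, hT1S, hT1c, hT1H⟩ := hMg (Mf N) α S χ hS
    obtain ⟨T, hTT1, hTc, hTH⟩ := hMf N α T1 χ hT1c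
    refine ⟨T, hTT1.trans hT1S, hTc, ?_⟩
    intro j hj
    rcases eq_or_lt_of_le hj with h | h
    · exact h ▸ homOn_mono hTT1 hT1H
    · exact hTH j (Nat.lt_succ_iff.mp h)

theorem finsetMapSymmDiff {α β : Type} [DecidableEq α] [DecidableEq β] (f : α ↪ β)
    (A B : Finset α) : symmDiff (A.map f) (B.map f) = (symmDiff A B).map f := by
  ext x
  simp only [Finset.mem_symmDiff, Finset.mem_map]
  constructor
  · rintro (⟨⟨a, ha, rfl⟩, hnb⟩ | ⟨⟨a, ha, rfl⟩, hnb⟩)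
    · exact ⟨a, Or.inl ⟨ha, fun h => hnb ⟨a, h, rfl⟩⟩, rfl⟩
    · exact ⟨a, Or.inr ⟨ha, fun h => hnb ⟨a, h, rfl⟩⟩, rfl⟩
  · rintro ⟨a, ⟨ha, hnb⟩ | ⟨ha, hnb⟩, rfl⟩
    · exact Or.inl ⟨⟨a, ha, rfl⟩, fun ⟨b, hb, hba⟩ => hnb (f.injective hba ▸ hb)⟩
    · exact Or.inr ⟨⟨a, ha, rfl⟩, fun ⟨b, hb, hba⟩ => hnb (f.injective hba ▸ hb)⟩

end RamseyAux


/-- An embedding of the hypercube `Q_d` into `Q_n`: an injective map on vertex sets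
(identified with finite subsets of `Fin d`, resp. `Fin n`) preserving the edges,
where two vertices are adjacent iff their symmetric difference has exactly one element. -/
def IsCubeEmbedding {d n : ℕ} (ψ : Finset (Fin d) → Finset (Fin n)) : Prop :=
  Function.Injective ψ ∧
    ∀ A B : Finset (Fin d), (symmDiff A B).card = 1 → (symmDiff (ψ A) (ψ B)).card = 1

/-- `S ⊆ V_n` contains a copy of `F ⊆ V_d`. -/
def ContainsCopy {d n : ℕ} (F : Set (Finset (Fin d))) (S : Set (Finset (Fin n))) : Prop :=
  ∃ ψ : Finset (Fin d) → Finset (Fin n), IsCubeEmbedding ψ ∧ ∀ A ∈ F, ψ A ∈ S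

/-- `F ⊆ V_d` is `t`-Ramsey: for all sufficiently large `n`, every `t`-coloring of `Q_n`
contains a monochromatic copy of `F`. -/
def IsRamsey (t d : ℕ) (F : Set (Finset (Fin d))) : Prop :=
  ∃ n₀ : ℕ, ∀ n, n₀ ≤ n → ∀ c : Finset (Fin n) → Fin t,
    ∃ i : Fin t, ContainsCopy F {A | c A = i}

/-- Lemma 3 (layer:lem): for all `s, t ≥ 1` there exists `c_L(s,t)` such that every
`t`-coloring of `Q_n`, `n ≥ c_L(s,t)`, contains a copy of `Q_s` (an `s`-dimensional
subcube, given by an embedding of `Q_s`) on which the coloring is layered, i.e. constant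
on each layer of the subcube. -/
theorem exists_layered_subcube (s t : ℕ) (hs : 1 ≤ s) (ht : 1 ≤ t) :
    ∃ cL : ℕ, ∀ n, cL ≤ n → ∀ c : Finset (Fin n) → Fin t,
      ∃ ψ : Finset (Fin s) → Finset (Fin n), IsCubeEmbedding ψ ∧
        ∀ A B : Finset (Fin s), A.card = B.card → c (ψ A) = c (ψ B) := by
  obtain ⟨Mf, hMf⟩ := levelsAux ht s
  refine ⟨Mf s, ?_⟩
  intro n hn c
  obtain ⟨T, _, hTc, hTH⟩ := hMf s (Fin n) (Finset.univ : Finset (Fin n)) c (by simpa using hn)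
  obtain ⟨Y, hYT, hYc⟩ := Finset.exists_subset_card_eq hTc
  let e := Y.orderIsoOfFin hYc
  let f : Fin s ↪ Fin n :=
    ⟨fun i => (e i : Fin n), fun i j h => e.injective (Subtype.coe_injective h)⟩
  refine ⟨fun A => A.map f, ⟨Finset.map_injective f, ?_⟩, ?_⟩
  · intro A B hAB
    rw [finsetMapSymmDiff, Finset.card_map]
    exact hAB
  · intro A B hAB
    have hsubY : ∀ A : Finset (Fin s), A.map f ⊆ Y := by
      intro A x hx
      obtain ⟨a, _, rfl⟩ := Finset.mem_map.mp hx
      exact (e a).2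
    have hAs : A.card ≤ s := by simpa using A.card_le_univ
    exact hTH A.card hAs (A.map f) (B.map f) ((hsubY A).trans hYT) ((hsubY B).trans hYT)
      (Finset.card_map _) (by rw [Finset.card_map, hAB])
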